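/- For every n ≥ 1, the hierarchical-ordering numbers satisfy the recurrence H_n = ∑_{k=1}^{n} C(n−1, k−1) · B_k · H_{n−k}, where C(·,·) denotes the binomial coefficient. -/

import Mathlib

open Finset PowerSeries Filter Nat

/-- `L` is an ordered set partition of the finite set `S`: a finite sequence of pairwise
disjoint nonempty subsets of `S` whose union is `S`. -/
def IsOrderedSetPartition {α : Type*} [DecidableEq α] (S : Finset α) (L : List (Finset α)) :
    Prop :=
  (∀ T ∈ L, T ≠ ∅) ∧ L.Pairwise Disjoint ∧ L.foldr (· ∪ ·) ∅ = S

/-- The type of ordered set partitions of the finite set `S`. -/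
def OrderedSetPartition {α : Type*} [DecidableEq α] (S : Finset α) :=
  {L : List (Finset α) // IsOrderedSetPartition S L}

/-- The ordered Bell number `B n`: the number of ordered set partitions of an `n`-element set. -/
noncomputable def orderedBell (n : ℕ) : ℕ :=
  Nat.card (OrderedSetPartition (Finset.univ : Finset (Fin n)))

/-- A hierarchical ordering (society) on the finite set `S`: an (unordered) set partition of `S`
into nonempty blocks, together with an ordered set partition of each block. -/
def HierarchicalOrdering {α : Type*} [DecidableEq α] (S : Finset α) :=
  (P : Finpartition S) × ((b : P.parts) → OrderedSetPartition (b : Finset α))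

/-- `H n`: the number of hierarchical orderings on an `n`-element set. -/
noncomputable def hier (n : ℕ) : ℕ :=
  Nat.card (HierarchicalOrdering (Finset.univ : Finset (Fin n)))

section OSP

variable {α β : Type*} [DecidableEq α] [DecidableEq β]

lemma mem_foldr_union (L : List (Finset α)) (a : α) :
    a ∈ L.foldr (· ∪ ·) ∅ ↔ ∃ T ∈ L, a ∈ T := by
  induction L with
  | nil => simp
  | cons T L ih => simp [ih]

lemma IsOrderedSetPartition.mem_iff {S : Finset α} {L : List (Finset α)}
    (h : IsOrderedSetPartition S L) {a : α} : a ∈ S ↔ ∃ T ∈ L, a ∈ T := by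
  rw [← h.2.2, mem_foldr_union]

lemma IsOrderedSetPartition.subset_of_mem {S : Finset α} {L : List (Finset α)}
    (h : IsOrderedSetPartition S L) {T : Finset α} (hT : T ∈ L) : T ⊆ S :=
  fun a ha => h.mem_iff.2 ⟨T, hT, ha⟩

lemma IsOrderedSetPartition.nodup {S : Finset α} {L : List (Finset α)}
    (h : IsOrderedSetPartition S L) : L.Nodup := by
  obtain ⟨h1, h2, -⟩ := h
  refine h2.imp_of_mem ?_
  intro T U hT hU hd hTU
  subst hTU
  exact h1 T hT (disjoint_self.1 hd)

instance instFiniteOSP [Fintype α] (S : Finset α) : Finite (OrderedSetPartition S) :=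
  Finite.of_injective
    (fun L => (⟨L.1, L.2.nodup⟩ : {l : List (Finset α) // l.Nodup}))
    (fun a b h => Subtype.ext (Subtype.mk_eq_mk.1 h))

lemma filter_map_self (f : α ↪ β) {T S : Finset α} (h : T ⊆ S) :
    S.filter (fun a => f a ∈ T.map f) = T := by
  ext a
  simp only [Finset.mem_filter, Finset.mem_map']
  exact ⟨fun h' => h'.2, fun h' => ⟨h h', h'⟩⟩

lemma map_filter_self (f : α ↪ β) {T : Finset β} {S : Finset α} (h : T ⊆ S.map f) :
    (S.filter (fun a => f a ∈ T)).map f = T := by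
  ext b
  simp only [Finset.mem_map, Finset.mem_filter]
  constructor
  · rintro ⟨a, ⟨-, ha⟩, rfl⟩; exact ha
  · intro hb
    obtain ⟨a, ha, rfl⟩ := Finset.mem_map.1 (h hb)
    exact ⟨a, ⟨ha, hb⟩, rfl⟩

lemma isOSP_map (f : α ↪ β) {S : Finset α} {L : List (Finset α)}
    (h : IsOrderedSetPartition S L) :
    IsOrderedSetPartition (S.map f) (L.map (Finset.map f)) := by
  obtain ⟨h1, h2, h3⟩ := h
  have hmem : ∀ a, a ∈ S ↔ ∃ T ∈ L, a ∈ T := fun a => by rw [← h3, mem_foldr_union]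
  refine ⟨?_, ?_, ?_⟩
  · intro T hT
    obtain ⟨U, hU, rfl⟩ := List.mem_map.1 hT
    simpa [Finset.map_eq_empty] using h1 U hU
  · exact List.pairwise_map.2 (h2.imp (fun hd => (Finset.disjoint_map f).2 hd))
  · ext b
    simp only [mem_foldr_union, List.mem_map, Finset.mem_map]
    constructor
    · rintro ⟨T, ⟨U, hU, rfl⟩, hb⟩
      obtain ⟨a, ha, rfl⟩ := Finset.mem_map.1 hb
      exact ⟨a, (hmem a).2 ⟨U, hU, ha⟩, rfl⟩
    · rintro ⟨a, ha, rfl⟩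
      obtain ⟨U, hU, haU⟩ := (hmem a).1 ha
      exact ⟨U.map f, ⟨U, hU, rfl⟩, Finset.mem_map_of_mem f haU⟩

lemma isOSP_preimage (f : α ↪ β) {S : Finset α} {M : List (Finset β)}
    (h : IsOrderedSetPartition (S.map f) M) :
    IsOrderedSetPartition S (M.map (fun T => S.filter (fun a => f a ∈ T))) := by
  obtain ⟨h1, h2, h3⟩ := h
  have hmem : ∀ b, b ∈ S.map f ↔ ∃ T ∈ M, b ∈ T := fun b => by rw [← h3, mem_foldr_union]
  refine ⟨?_, ?_, ?_⟩
  · intro T hT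
    obtain ⟨U, hU, rfl⟩ := List.mem_map.1 hT
    obtain ⟨b, hb⟩ := Finset.nonempty_iff_ne_empty.2 (h1 U hU)
    obtain ⟨a, ha, rfl⟩ := Finset.mem_map.1 ((hmem b).2 ⟨U, hU, hb⟩)
    intro he
    have : a ∈ S.filter (fun a => f a ∈ U) := Finset.mem_filter.2 ⟨ha, hb⟩
    rw [he] at this
    exact absurd this (Finset.notMem_empty a)
  · refine List.pairwise_map.2 (h2.imp ?_)
    intro U V hUV
    rw [Finset.disjoint_left]
    intro a ha hav
    exact (Finset.disjoint_left.1 hUV) (Finset.mem_filter.1 ha).2 (Finset.mem_filter.1 hav).2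
  · ext a
    simp only [mem_foldr_union, List.mem_map]
    constructor
    · rintro ⟨T, ⟨U, hU, rfl⟩, ha⟩
      exact (Finset.mem_filter.1 ha).1
    · intro ha
      obtain ⟨U, hU, hfa⟩ := (hmem (f a)).1 (Finset.mem_map_of_mem f ha)
      exact ⟨_, ⟨U, hU, rfl⟩, Finset.mem_filter.2 ⟨ha, hfa⟩⟩

/-- Transport of ordered set partitions along an embedding. -/
noncomputable def ospCongr (f : α ↪ β) (S : Finset α) :
    OrderedSetPartition S ≃ OrderedSetPartition (S.map f) where
  toFun L := ⟨L.1.map (Finset.map f), isOSP_map f L.2⟩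
  invFun M := ⟨M.1.map (fun T => S.filter (fun a => f a ∈ T)), isOSP_preimage f M.2⟩
  left_inv L := by
    apply Subtype.ext
    simp only [List.map_map]
    conv_rhs => rw [← List.map_id L.1]
    refine List.map_congr_left ?_
    intro T hT
    exact filter_map_self f (L.2.subset_of_mem hT)
  right_inv M := by
    apply Subtype.ext
    simp only [List.map_map]
    conv_rhs => rw [← List.map_id M.1]
    refine List.map_congr_left ?_
    intro T hT
    exact map_filter_self f (M.2.subset_of_mem hT)

lemma exists_map_eq (S : Finset α) : ∃ g : Fin S.card ↪ α, (Finset.univ).map g = S := by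
  refine ⟨S.equivFin.symm.toEmbedding.trans (Function.Embedding.subtype _), ?_⟩
  rw [← Finset.map_map, Finset.map_univ_equiv]
  rw [Finset.univ_eq_attach, Finset.attach_map_val]

lemma card_osp (S : Finset α) : Nat.card (OrderedSetPartition S) = orderedBell S.card := by
  obtain ⟨g, hg⟩ := exists_map_eq S
  calc Nat.card (OrderedSetPartition S)
      = Nat.card (OrderedSetPartition ((Finset.univ : Finset (Fin S.card)).map g)) := by rw [hg]
    _ = Nat.card (OrderedSetPartition (Finset.univ : Finset (Fin S.card))) :=
        (Nat.card_congr (ospCongr g Finset.univ)).symm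
    _ = orderedBell S.card := rfl

end OSP

section FP

variable {α β : Type*} [DecidableEq α] [DecidableEq β]

lemma finpart_ext {A : Finset α} {P Q : Finpartition A} (h : P.parts = Q.parts) : P = Q := by
  cases P; cases Q; simp only at h; subst h; rfl

/-- `Finset.map` as an embedding of `Finset α` into `Finset β`. -/
def fmapEmb (f : α ↪ β) : Finset α ↪ Finset β := ⟨Finset.map f, Finset.map_injective f⟩

@[simp] lemma fmapEmb_apply (f : α ↪ β) (s : Finset α) : fmapEmb f s = s.map f := rfl

/-- Transport of finpartitions along an embedding. -/
noncomputable def finpartCongr (f : α ↪ β) (S : Finset α) :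
    Finpartition S ≃ Finpartition (S.map f) where
  toFun P :=
    { parts := P.parts.map (fmapEmb f)
      supIndep := by
        rw [Finset.supIndep_iff_pairwiseDisjoint]
        rintro x hx y hy hxy
        simp only [Finset.coe_map, Set.mem_image, Finset.mem_coe,
          fmapEmb_apply] at hx hy
        obtain ⟨u, hu, rfl⟩ := hx
        obtain ⟨v, hv, rfl⟩ := hy
        have huv : u ≠ v := by rintro rfl; exact hxy rfl
        exact (Finset.disjoint_map f).2 (P.disjoint hu hv huv)
      sup_parts := by
        ext b
        simp only [Finset.mem_sup, Finset.mem_map, fmapEmb_apply, id]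
        constructor
        · rintro ⟨T, ⟨u, hu, rfl⟩, hb⟩
          obtain ⟨a, ha, rfl⟩ := Finset.mem_map.1 hb
          exact ⟨a, P.le hu ha, rfl⟩
        · rintro ⟨a, ha, rfl⟩
          have : a ∈ P.parts.sup id := by rw [P.sup_parts]; exact ha
          obtain ⟨u, hu, hau⟩ := Finset.mem_sup.1 this
          exact ⟨u.map f, ⟨u, hu, rfl⟩, Finset.mem_map_of_mem f hau⟩
      bot_notMem := by
        simp only [Finset.bot_eq_empty, Finset.mem_map, fmapEmb_apply]
        rintro ⟨u, hu, h⟩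
        rw [Finset.map_eq_empty] at h
        subst h
        exact P.bot_notMem hu }
  invFun P :=
    { parts := P.parts.image (fun T => S.filter (fun a => f a ∈ T))
      supIndep := by
        rw [Finset.supIndep_iff_pairwiseDisjoint]
        rintro x hx y hy hxy
        simp only [Finset.coe_image, Set.mem_image, Finset.mem_coe] at hx hy
        obtain ⟨u, hu, rfl⟩ := hx
        obtain ⟨v, hv, rfl⟩ := hy
        have huv : u ≠ v := by rintro rfl; exact hxy rfl
        have hd := P.disjoint hu hv huv
        simp only [Function.onFun, id_eq] at hd ⊢
        rw [Finset.disjoint_left]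
        intro a ha hav
        exact (Finset.disjoint_left.1 hd) (Finset.mem_filter.1 ha).2 (Finset.mem_filter.1 hav).2
      sup_parts := by
        ext a
        simp only [Finset.mem_sup, Finset.mem_image, id]
        constructor
        · rintro ⟨x, ⟨u, hu, rfl⟩, ha⟩
          exact (Finset.mem_filter.1 ha).1
        · intro ha
          have : f a ∈ P.parts.sup id := by
            rw [P.sup_parts]; exact Finset.mem_map_of_mem f ha
          obtain ⟨u, hu, hau⟩ := Finset.mem_sup.1 this
          exact ⟨_, ⟨u, hu, rfl⟩, Finset.mem_filter.2 ⟨ha, hau⟩⟩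
      bot_notMem := by
        simp only [Finset.bot_eq_empty, Finset.mem_image]
        rintro ⟨u, hu, h⟩
        obtain ⟨b, hb⟩ := Finpartition.nonempty_of_mem_parts P hu
        obtain ⟨a, ha, rfl⟩ := Finset.mem_map.1 (P.le hu hb)
        have : a ∈ S.filter (fun a => f a ∈ u) := Finset.mem_filter.2 ⟨ha, hb⟩
        rw [h] at this
        exact absurd this (Finset.notMem_empty a) }
  left_inv P := by
    apply finpart_ext
    ext x
    simp only [Finset.mem_image, Finset.mem_map, fmapEmb_apply]
    constructor
    · rintro ⟨T, ⟨u, hu, rfl⟩, rfl⟩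
      rwa [filter_map_self f (P.le hu)]
    · intro hx
      exact ⟨x.map f, ⟨x, hx, rfl⟩, filter_map_self f (P.le hx)⟩
  right_inv P := by
    apply finpart_ext
    ext T
    simp only [Finset.mem_map, Finset.mem_image, fmapEmb_apply]
    constructor
    · rintro ⟨x, ⟨u, hu, rfl⟩, rfl⟩
      rwa [map_filter_self f (P.le hu)]
    · intro hT
      exact ⟨_, ⟨T, hT, rfl⟩, map_filter_self f (P.le hT)⟩

lemma sum_finpart (f : α ↪ β) (S : Finset α) :
    ∑ P : Finpartition (S.map f), ∏ b ∈ P.parts, orderedBell b.card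
      = ∑ P : Finpartition S, ∏ b ∈ P.parts, orderedBell b.card := by
  rw [← Equiv.sum_comp (finpartCongr f S)
    (fun P => ∏ b ∈ P.parts, orderedBell b.card)]
  refine Finset.sum_congr rfl fun P _ => ?_
  show ∏ b ∈ P.parts.map (fmapEmb f), orderedBell b.card = _
  rw [Finset.prod_map]
  exact Finset.prod_congr rfl fun u _ => by
    rw [fmapEmb_apply, Finset.card_map]

end FP

section HO

variable {α : Type*} [DecidableEq α]

instance instFiniteHO [Fintype α] (S : Finset α) : Finite (HierarchicalOrdering S) :=
  inferInstanceAs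
    (Finite ((P : Finpartition S) × ((b : P.parts) → OrderedSetPartition (b : Finset α))))

lemma card_HO [Fintype α] (S : Finset α) :
    Nat.card (HierarchicalOrdering S)
      = ∑ P : Finpartition S, ∏ b ∈ P.parts, orderedBell b.card := by
  have h0 : Nat.card (HierarchicalOrdering S)
      = Nat.card ((P : Finpartition S) ×
          ((b : P.parts) → OrderedSetPartition (b : Finset α))) := rfl
  rw [h0]
  haveI : ∀ P : Finpartition S,
      Fintype ((b : P.parts) → OrderedSetPartition ((b : Finset α))) :=
    fun P => Fintype.ofFinite _
  rw [Nat.card_eq_fintype_card, Fintype.card_sigma]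
  refine Finset.sum_congr rfl fun P _ => ?_
  rw [← Nat.card_eq_fintype_card, Nat.card_pi, ← Finset.prod_coe_sort P.parts
    (fun b => orderedBell b.card)]
  exact Finset.prod_congr rfl fun b _ => card_osp _

lemma card_HO_eq [Fintype α] (S : Finset α) :
    Nat.card (HierarchicalOrdering S) = hier S.card := by
  obtain ⟨g, hg⟩ := exists_map_eq S
  rw [card_HO]
  have h1 : hier S.card
      = ∑ P : Finpartition (Finset.univ : Finset (Fin S.card)),
          ∏ b ∈ P.parts, orderedBell b.card := card_HO _
  rw [h1, ← sum_finpart g Finset.univ, hg]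

lemma avoid_parts_of_mem {A : Finset α} (P : Finpartition A) {S : Finset α}
    (hS : S ∈ P.parts) : (P.avoid S).parts = P.parts.erase S := by
  ext c
  rw [Finpartition.mem_avoid, Finset.mem_erase]
  constructor
  · rintro ⟨d, hd, hdS, rfl⟩
    have hne : d ≠ S := fun h => hdS (le_of_eq h)
    have hdisj : Disjoint d S := P.disjoint hd hS hne
    rw [Finset.sdiff_eq_self_of_disjoint hdisj]
    exact ⟨hne, hd⟩
  · rintro ⟨hne, hc⟩
    have hdisj : Disjoint c S := P.disjoint hc hS hne
    refine ⟨c, hc, ?_, Finset.sdiff_eq_self_of_disjoint hdisj⟩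
    intro hle
    exact P.bot_notMem (by rwa [hdisj.eq_bot_of_le hle] at hc)

end HO

/-- **Recurrence for `H_n`.** For every `n ≥ 1`,
`H_n = ∑_{k=1}^{n} C(n−1, k−1) · B_k · H_{n−k}`. -/
theorem hier_recurrence (n : ℕ) (hn : 1 ≤ n) :
    hier n = ∑ k ∈ Finset.Icc 1 n, (n - 1).choose (k - 1) * orderedBell k * hier (n - k) := by
  have hx : (0 : ℕ) < n := hn
  set x0 : Fin n := ⟨0, hx⟩ with hx0
  -- Step 1: hier n as a sum over finpartitions
  have h1 : hier n
      = ∑ P : Finpartition (Finset.univ : Finset (Fin n)),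
          ∏ b ∈ P.parts, orderedBell b.card := card_HO _
  -- the set of possible parts containing x0
  set Ω : Finset (Finset (Fin n)) :=
    (Finset.univ : Finset (Fin n)).powerset.filter (fun S => x0 ∈ S) with hΩ
  have hmaps : ∀ P ∈ (Finset.univ : Finset (Finpartition (Finset.univ : Finset (Fin n)))),
      P.part x0 ∈ Ω := by
    intro P _
    rw [hΩ, Finset.mem_filter, Finset.mem_powerset]
    exact ⟨P.le (P.part_mem.2 (Finset.mem_univ x0)), P.mem_part (Finset.mem_univ x0)⟩
  have h2 : hier n = ∑ S ∈ Ω, ∑ P ∈ Finset.univ.filter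
      (fun P : Finpartition (Finset.univ : Finset (Fin n)) => P.part x0 = S),
        ∏ b ∈ P.parts, orderedBell b.card := by
    rw [h1, Finset.sum_fiberwise_of_maps_to hmaps]
  -- Step 2: inner sum
  have hB : ∀ S ∈ Ω,
      (∑ P ∈ Finset.univ.filter
        (fun P : Finpartition (Finset.univ : Finset (Fin n)) => P.part x0 = S),
          ∏ b ∈ P.parts, orderedBell b.card)
        = orderedBell S.card * hier (n - S.card) := by
    intro S hS
    rw [hΩ, Finset.mem_filter, Finset.mem_powerset] at hS
    obtain ⟨hSuniv, hx0S⟩ := hS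
    have hSne : S ≠ ⊥ := by
      simp only [Finset.bot_eq_empty]
      exact Finset.ne_empty_of_mem hx0S
    have hdisj : Disjoint ((Finset.univ : Finset (Fin n)) \ S) S := Finset.sdiff_disjoint
    have hsup : ((Finset.univ : Finset (Fin n)) \ S) ⊔ S = Finset.univ := by
      rw [Finset.sup_eq_union, Finset.sdiff_union_of_subset hSuniv]
    have hcompl : Nat.card (HierarchicalOrdering ((Finset.univ : Finset (Fin n)) \ S))
        = hier (n - S.card) := by
      rw [card_HO_eq, Finset.card_sdiff_of_subset hSuniv, Finset.card_univ, Fintype.card_fin]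
    rw [← hcompl, card_HO, Finset.mul_sum]
    refine Finset.sum_nbij' (fun P => P.avoid S)
      (fun Q => Q.extend hSne hdisj hsup) ?_ ?_ ?_ ?_ ?_
    · intro P _
      exact Finset.mem_univ _
    · intro Q _
      rw [Finset.mem_filter]
      refine ⟨Finset.mem_univ _, ?_⟩
      refine Finpartition.part_eq_of_mem _ ?_ hx0S
      rw [Finpartition.extend_parts]
      exact Finset.mem_insert_self _ _
    · intro P hP
      rw [Finset.mem_filter] at hP
      have hSP : S ∈ P.parts := hP.2 ▸ P.part_mem.2 (Finset.mem_univ x0)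
      apply finpart_ext
      rw [Finpartition.extend_parts, avoid_parts_of_mem P hSP,
        Finset.insert_erase hSP]
    · intro Q _
      have hSnotin : S ∉ Q.parts := by
        intro hmem
        have := Q.le hmem hx0S
        rw [Finset.mem_sdiff] at this
        exact this.2 hx0S
      apply finpart_ext
      have hSmem : S ∈ (Q.extend hSne hdisj hsup).parts := by
        rw [Finpartition.extend_parts]; exact Finset.mem_insert_self _ _
      rw [avoid_parts_of_mem _ hSmem, Finpartition.extend_parts,
        Finset.erase_insert hSnotin]
    · intro P hP
      rw [Finset.mem_filter] at hP
      have hSP : S ∈ P.parts := hP.2 ▸ P.part_mem.2 (Finset.mem_univ x0)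
      rw [avoid_parts_of_mem P hSP]
      exact (Finset.mul_prod_erase P.parts (fun b => orderedBell b.card) hSP).symm
  rw [h2, Finset.sum_congr rfl hB]
  -- Step 3: fiber by cardinality
  have hmaps2 : ∀ S ∈ Ω, S.card ∈ Finset.Icc 1 n := by
    intro S hS
    rw [hΩ, Finset.mem_filter, Finset.mem_powerset] at hS
    rw [Finset.mem_Icc]
    constructor
    · exact Finset.card_pos.2 ⟨x0, hS.2⟩
    · simpa using Finset.card_le_card hS.1
  rw [← Finset.sum_fiberwise_of_maps_to hmaps2]
  refine Finset.sum_congr rfl fun k hk => ?_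
  rw [Finset.mem_Icc] at hk
  have h1k : 1 ≤ k := hk.1
  have hcount : (Ω.filter (fun S => S.card = k)).card = (n - 1).choose (k - 1) := by
    have : (Ω.filter (fun S => S.card = k)).card
        = (Finset.powersetCard (k - 1) ((Finset.univ : Finset (Fin n)).erase x0)).card := by
      refine Finset.card_nbij' (fun S => S.erase x0) (fun t => insert x0 t) ?_ ?_ ?_ ?_
      · intro S hS
        rw [Finset.mem_coe, hΩ, Finset.mem_filter, Finset.mem_filter, Finset.mem_powerset] at hS
        obtain ⟨⟨hSu, hxS⟩, hcard⟩ := hS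
        rw [Finset.mem_coe, Finset.mem_powersetCard]
        exact ⟨Finset.erase_subset_erase x0 hSu,
          by rw [Finset.card_erase_of_mem hxS, hcard]⟩
      · intro t ht
        rw [Finset.mem_coe, Finset.mem_powersetCard] at ht
        have hx0t : x0 ∉ t := fun h => (Finset.mem_erase.1 (ht.1 h)).1 rfl
        rw [Finset.mem_coe, hΩ, Finset.mem_filter, Finset.mem_filter, Finset.mem_powerset]
        refine ⟨⟨Finset.subset_univ _, Finset.mem_insert_self _ _⟩, ?_⟩
        rw [Finset.card_insert_of_notMem hx0t, ht.2]
        omega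
      · intro S hS
        rw [Finset.mem_coe, hΩ, Finset.mem_filter, Finset.mem_filter] at hS
        exact Finset.insert_erase hS.1.2
      · intro t ht
        rw [Finset.mem_coe, Finset.mem_powersetCard] at ht
        have hx0t : x0 ∉ t := fun h => (Finset.mem_erase.1 (ht.1 h)).1 rfl
        exact Finset.erase_insert hx0t
    rw [this, Finset.card_powersetCard, Finset.card_erase_of_mem (Finset.mem_univ x0),
      Finset.card_univ, Fintype.card_fin]
  calc ∑ S ∈ Ω.filter (fun S => S.card = k), orderedBell S.card * hier (n - S.card)
      = ∑ S ∈ Ω.filter (fun S => S.card = k), orderedBell k * hier (n - k) := by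
        refine Finset.sum_congr rfl fun S hS => ?_
        rw [(Finset.mem_filter.1 hS).2]
    _ = (Ω.filter (fun S => S.card = k)).card * (orderedBell k * hier (n - k)) := by
        rw [Finset.sum_const, smul_eq_mul]
    _ = (n - 1).choose (k - 1) * orderedBell k * hier (n - k) := by
        rw [hcount, mul_assoc]
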